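/- Let 𝒰, 𝒱 be finite sets, p a probability distribution on 𝒰×𝒱, ε ∈ [0,1], and let (ρ_{BS|u,v}) be density matrices on ℂ^{d_B}⊗ℂ^{d_S}. Let e be a symbol not in 𝒱, 𝒱̃ := 𝒱 ∪ {e}, and define ρ_{UVṼBS} := ∑_{u,v} p(u,v) |u⟩⟨u| ⊗ |v⟩⟨v| ⊗ ((1−ε)|v⟩⟨v| + ε|e⟩⟨e|) ⊗ ρ_{BS|u,v}. With U′ := (U,Ṽ) (the pair register), the mutual informations of the marginals of ρ_{UVṼBS} satisfy I[U′;B] − I[U′;S] = I[U;B] − I[U;S] + (1 − ε)·( I[V;B|U] − I[V;S|U] ). -/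

import Mathlib

open scoped Kronecker ComplexOrder
open Matrix

noncomputable section

/-- Apply a real function to a Hermitian matrix via the spectral decomposition
(returns `0` on non-Hermitian matrices). -/
noncomputable def matCalc {n : Type*} [Fintype n] [DecidableEq n] (f : ℝ → ℝ)
    (M : Matrix n n ℂ) : Matrix n n ℂ :=
  if h : M.IsHermitian then
    (Matrix.IsHermitian.eigenvectorUnitary h : Matrix n n ℂ) *
      Matrix.diagonal (fun i => (f (h.eigenvalues i) : ℂ)) *
      star (Matrix.IsHermitian.eigenvectorUnitary h : Matrix n n ℂ)
  else 0

/-- Functional-calculus power of a positive semidefinite matrix, taken on the support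
(the eigenvalue `0` is sent to `0`). -/
noncomputable def mpow {n : Type*} [Fintype n] [DecidableEq n]
    (M : Matrix n n ℂ) (c : ℝ) : Matrix n n ℂ :=
  matCalc (fun x => if x = 0 then 0 else Real.rpow x c) M

/-- The von Neumann entropy `−Tr[ρ log₂ ρ]` (with the convention `0·log₂0 = 0`). -/
noncomputable def vnEntropy {n : Type*} [Fintype n] [DecidableEq n]
    (ρ : Matrix n n ℂ) : ℝ :=
  (Matrix.trace (matCalc (fun x => -(x * Real.logb 2 x)) ρ)).re

/-- A density matrix: positive semidefinite with unit trace. -/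
def IsDensityMatrix {n : Type*} [Fintype n] (ρ : Matrix n n ℂ) : Prop :=
  ρ.PosSemidef ∧ ρ.trace = 1

/-- A quantum channel: a map admitting a Kraus representation. -/
def IsQChannel {m n : Type*} [Fintype m] [DecidableEq m] [Fintype n]
    (Φ : Matrix m m ℂ → Matrix n n ℂ) : Prop :=
  ∃ (k : ℕ) (K : Fin k → Matrix n m ℂ),
    (∑ i, (K i)ᴴ * K i = 1) ∧ ∀ X, Φ X = ∑ i, K i * X * (K i)ᴴ

/-- Tensor extension `Φ ⊗ Ψ` of two (linear) maps on matrices. -/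
noncomputable def mapTensor {m m' n n' : Type*} [Fintype m] [DecidableEq m]
    [Fintype m'] [Fintype n] [Fintype n']
    (Φ : Matrix m m ℂ → Matrix n n ℂ) (Ψ : Matrix m' m' ℂ → Matrix n' n' ℂ)
    (X : Matrix (m × m') (m × m') ℂ) : Matrix (n × n') (n × n') ℂ :=
  Matrix.of fun p q =>
    ∑ e : m, ∑ g : m,
      Φ (Matrix.single e g 1) p.1 q.1 *
        Ψ (Matrix.of fun f h => X (e, f) (g, h)) p.2 q.2

/-- `k`-fold tensor power `Φ^{⊗k}` of a (linear) map on matrices. -/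
noncomputable def mapTPow {m n : Type*} [Fintype m] [DecidableEq m] [Fintype n]
    (Φ : Matrix m m ℂ → Matrix n n ℂ) (k : ℕ)
    (X : Matrix (Fin k → m) (Fin k → m) ℂ) : Matrix (Fin k → n) (Fin k → n) ℂ :=
  Matrix.of fun x y =>
    ∑ e : Fin k → m, ∑ g : Fin k → m,
      X e g * ∏ i, Φ (Matrix.single (e i) (g i) 1) (x i) (y i)

/-- `k`-fold Kronecker (tensor) power of a matrix. -/
noncomputable def tpow {d : Type*} (ρ : Matrix d d ℂ) (k : ℕ) :
    Matrix (Fin k → d) (Fin k → d) ℂ :=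
  Matrix.of fun x y => ∏ i, ρ (x i) (y i)

/-- Partial trace over the first tensor factor. -/
noncomputable def traceOutFst {a b : Type*} [Fintype a]
    (M : Matrix (a × b) (a × b) ℂ) : Matrix b b ℂ :=
  Matrix.of fun j j' => ∑ i, M (i, j) (i, j')

/-- Partial trace over the second tensor factor. -/
noncomputable def traceOutSnd {a b : Type*} [Fintype b]
    (M : Matrix (a × b) (a × b) ℂ) : Matrix a a ℂ :=
  Matrix.of fun i i' => ∑ j, M (i, j) (i', j)

/-- Quantum mutual information `I[X;Y] = H(ρ_X) + H(ρ_Y) − H(ρ_{XY})` of a bipartite state. -/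
noncomputable def mutInfo {a b : Type*} [Fintype a] [DecidableEq a] [Fintype b] [DecidableEq b]
    (ρ : Matrix (a × b) (a × b) ℂ) : ℝ :=
  vnEntropy (traceOutSnd ρ) + vnEntropy (traceOutFst ρ) - vnEntropy ρ

/-- Fidelity `F(ρ,σ) = Tr √(√σ ρ √σ)`. -/
noncomputable def fidelity {n : Type*} [Fintype n] [DecidableEq n]
    (ρ σ : Matrix n n ℂ) : ℝ :=
  (Matrix.trace (mpow (mpow σ (1/2) * ρ * mpow σ (1/2)) (1/2))).re

/-- Purified distance `P(ρ,σ) = √(1 − F(ρ,σ)²)`. -/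
noncomputable def purifiedDist {n : Type*} [Fintype n] [DecidableEq n]
    (ρ σ : Matrix n n ℂ) : ℝ :=
  Real.sqrt (1 - fidelity ρ σ ^ 2)

/-- Number of distinct eigenvalues (cardinality of the spectrum). -/
noncomputable def nEig {n : Type*} [Fintype n] [DecidableEq n] (M : Matrix n n ℂ) : ℕ :=
  (spectrum ℂ M).ncard

/-- The set of (distinct) eigenvalues of a Hermitian matrix, as a finset. -/
noncomputable def eigSet {n : Type*} [Fintype n] [DecidableEq n] (σ : Matrix n n ℂ) : Finset ℝ :=
  if h : σ.IsHermitian then Finset.univ.image h.eigenvalues else ∅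

/-- Spectral projection of a Hermitian matrix onto the eigenvalue `t`. -/
noncomputable def eigProj {n : Type*} [Fintype n] [DecidableEq n]
    (σ : Matrix n n ℂ) (t : ℝ) : Matrix n n ℂ :=
  matCalc (fun x => if x = t then 1 else 0) σ

/-- The pinching map `E_σ(X) = ∑_j P_j X P_j` with respect to `σ`. -/
noncomputable def pinch {n : Type*} [Fintype n] [DecidableEq n]
    (σ X : Matrix n n ℂ) : Matrix n n ℂ :=
  ∑ t ∈ eigSet σ, eigProj σ t * X * eigProj σ t

/-- The pinching map `id ⊗ E_σ` acting on the second factor of a bipartite system. -/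
noncomputable def pinchSnd {v n : Type*} [Fintype v] [DecidableEq v] [Fintype n] [DecidableEq n]
    (σ : Matrix n n ℂ) (Y : Matrix (v × n) (v × n) ℂ) : Matrix (v × n) (v × n) ℂ :=
  ∑ t ∈ eigSet σ, ((1 : Matrix v v ℂ) ⊗ₖ eigProj σ t) * Y * ((1 : Matrix v v ℂ) ⊗ₖ eigProj σ t)

/-- The projection `{A ≥ B}` onto the nonnegative eigenspaces of `A − B`. -/
noncomputable def projGE {n : Type*} [Fintype n] [DecidableEq n]
    (A B : Matrix n n ℂ) : Matrix n n ℂ :=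
  matCalc (fun x => if 0 ≤ x then 1 else 0) (A - B)

/-- `Q_{1−α}(ρ‖σ) = Tr[(σ^{α/(2(1−α))} ρ σ^{α/(2(1−α))})^{1−α}]`. -/
noncomputable def Qfun {n : Type*} [Fintype n] [DecidableEq n]
    (a : ℝ) (ρ σ : Matrix n n ℂ) : ℝ :=
  (Matrix.trace (mpow (mpow σ (a/(2*(1-a))) * ρ * mpow σ (a/(2*(1-a)))) (1-a))).re

/-- The sandwiched Rényi relative entropy
`D̲_β(ρ‖σ) = (1/(β−1)) log₂ Tr[(σ^{−(β−1)/(2β)} ρ σ^{−(β−1)/(2β)})^β]`. -/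
noncomputable def sRenyi {n : Type*} [Fintype n] [DecidableEq n]
    (b : ℝ) (ρ σ : Matrix n n ℂ) : ℝ :=
  (1/(b-1)) *
    Real.logb 2 ((Matrix.trace (mpow (mpow σ (-(b-1)/(2*b)) * ρ * mpow σ (-(b-1)/(2*b))) b)).re)

/-- The rank-one projector `|u⟩⟨u|`. -/
noncomputable def ketbra {n : Type*} [DecidableEq n] (u : n) : Matrix n n ℂ :=
  Matrix.single u u 1

/-- The classical–quantum state `∑_{u,v} p(u,v) |u⟩⟨u| ⊗ |v⟩⟨v| ⊗ ρ_{B|u,v}`. -/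
noncomputable def cqState {U V B : Type*} [Fintype U] [DecidableEq U]
    [Fintype V] [DecidableEq V] [Fintype B]
    (p : U × V → ℝ) (ρ : U → V → Matrix B B ℂ) :
    Matrix ((U × V) × B) ((U × V) × B) ℂ :=
  ∑ u, ∑ v, (p (u, v) : ℂ) • ((ketbra u ⊗ₖ ketbra v) ⊗ₖ ρ u v)

/-- A generic classical–quantum joint state with labels `lab i` and states `ρ i`. -/
noncomputable def cqJoint {ι X B : Type*} [Fintype ι] [Fintype X] [Fintype B]
    (p : ι → ℝ) (lab : ι → Matrix X X ℂ) (ρ : ι → Matrix B B ℂ) :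
    Matrix (X × B) (X × B) ℂ :=
  ∑ i, (p i : ℂ) • (lab i ⊗ₖ ρ i)

/-- Rényi conditional mutual information `I̲_β[V;B|U]`, given as the infimum over families of
positive definite density matrices `σ_{B|u}`. -/
noncomputable def renyiCondMI {U V B : Type*} [Fintype U] [DecidableEq U]
    [Fintype V] [DecidableEq V] [Fintype B] [DecidableEq B]
    (b : ℝ) (p : U × V → ℝ) (ρ : U → V → Matrix B B ℂ) : ℝ :=
  sInf { r | ∃ σ : U → Matrix B B ℂ,
    (∀ u, (σ u).PosDef ∧ (σ u).trace = 1) ∧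
    r = sRenyi b (cqState p ρ) (cqState p (fun u _ => σ u)) }

/-- The state of the erasure register: `(1−ε)|v⟩⟨v| + ε|e⟩⟨e|` (the erasure symbol is `none`). -/
noncomputable def erasureKet {V : Type*} [Fintype V] [DecidableEq V] (ε : ℝ) (v : V) :
    Matrix (Option V) (Option V) ℂ :=
  ((1 - ε : ℝ) : ℂ) • ketbra (Option.some v) + (ε : ℂ) • ketbra (Option.none)

open Polynomial

private lemma aeval_comm' {A B : Type*} [Ring A] [Ring B] [Algebra ℝ A] [Algebra ℝ B]
    (φ : A →+* B) (hφ : ∀ r : ℝ, φ (algebraMap ℝ A r) = algebraMap ℝ B r)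
    (q : ℝ[X]) (M : A) : aeval (φ M) q = φ (aeval M q) := by
  rw [aeval_def, aeval_def, hom_eval₂]
  congr 1
  exact (RingHom.ext hφ).symm

private def conjRingHom {n : Type*} [Fintype n] [DecidableEq n] (U : Matrix n n ℂ)
    (h1 : U * star U = 1) (h2 : star U * U = 1) : Matrix n n ℂ →+* Matrix n n ℂ where
  toFun X := U * X * star U
  map_one' := by rw [mul_one, h1]
  map_mul' X Y := by
    simp only [Matrix.mul_assoc]
    rw [← Matrix.mul_assoc (star U) U, h2, Matrix.one_mul]
  map_zero' := by simp
  map_add' X Y := by noncomm_ring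

private lemma aeval_conj {n : Type*} [Fintype n] [DecidableEq n] {U : Matrix n n ℂ}
    (h1 : U * star U = 1) (h2 : star U * U = 1) (q : ℝ[X]) (N : Matrix n n ℂ) :
    aeval (U * N * star U) q = U * aeval N q * star U := by
  have := aeval_comm' (conjRingHom U h1 h2) (fun r => by
    simp only [conjRingHom, RingHom.coe_mk, MonoidHom.coe_mk, OneHom.coe_mk,
      Algebra.algebraMap_eq_smul_one]
    rw [mul_smul_comm, mul_one, smul_mul_assoc, h1]) q N
  simpa [conjRingHom] using this

private lemma aeval_diagonal {n : Type*} [Fintype n] [DecidableEq n] (d : n → ℂ) (q : ℝ[X]) :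
    aeval (Matrix.diagonal d) q = Matrix.diagonal (fun i => aeval (d i) q) := by
  have h := aeval_comm' (Matrix.diagonalRingHom n ℂ) (fun r => by
    rw [Matrix.algebraMap_eq_diagonalRingHom]; rfl) q d
  have h2 : ∀ i, (aeval d q : n → ℂ) i = aeval (d i) q := fun i =>
    (aeval_comm' (Pi.evalRingHom (fun _ : n => ℂ) i) (fun r => rfl) q d).symm
  rw [show Matrix.diagonal d = Matrix.diagonalRingHom n ℂ d from rfl, h]
  exact congrArg Matrix.diagonal (funext fun i => (h2 i))

private lemma aeval_ofReal' (r : ℝ) (q : ℝ[X]) :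
    aeval ((r : ℂ)) q = ((q.eval r : ℝ) : ℂ) := by
  have := aeval_comm' (algebraMap ℝ ℂ) (fun r => rfl) q r
  exact Polynomial.aeval_algebraMap_apply_eq_algebraMap_eval r q

private lemma diag_herm {n : Type*} [Fintype n] [DecidableEq n] (d : n → ℝ) :
    (Matrix.diagonal (fun i => (d i : ℂ)))ᴴ = Matrix.diagonal (fun i => (d i : ℂ)) := by
  rw [Matrix.diagonal_conjTranspose]
  congr 1
  funext i
  simp [Pi.star_def]

private lemma decomp_herm {n : Type*} [Fintype n] [DecidableEq n]
    (U : Matrix n n ℂ) (d : n → ℝ) :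
    (U * Matrix.diagonal (fun i => (d i : ℂ)) * star U).IsHermitian := by
  unfold Matrix.IsHermitian
  rw [Matrix.star_eq_conjTranspose, Matrix.conjTranspose_mul, Matrix.conjTranspose_mul,
    Matrix.conjTranspose_conjTranspose, diag_herm, Matrix.mul_assoc]

/-- Main workhorse: trace of `matCalc f` on an explicitly diagonalized matrix. -/
private lemma trace_matCalc_decomp {n : Type*} [Fintype n] [DecidableEq n]
    (f : ℝ → ℝ) {U : Matrix n n ℂ} (h1 : U * star U = 1) (h2 : star U * U = 1)
    (d : n → ℝ) :
    (matCalc f (U * Matrix.diagonal (fun i => (d i : ℂ)) * star U)).trace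
      = ∑ i, (f (d i) : ℂ) := by
  set M := U * Matrix.diagonal (fun i => (d i : ℂ)) * star U with hMdef
  have hM : M.IsHermitian := decomp_herm U d
  set s : Finset ℝ := (Finset.univ.image hM.eigenvalues) ∪ (Finset.univ.image d) with hs
  set q : ℝ[X] := Lagrange.interpolate s id f with hqdef
  have hq : ∀ r ∈ s, q.eval r = f r := fun r hr =>
    Lagrange.eval_interpolate_at_node f (Set.injOn_id _) hr
  have hU1 : (hM.eigenvectorUnitary : Matrix n n ℂ) * star (hM.eigenvectorUnitary : Matrix n n ℂ) = 1 :=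
    Matrix.mem_unitaryGroup_iff.mp hM.eigenvectorUnitary.2
  have hU2 : star (hM.eigenvectorUnitary : Matrix n n ℂ) * (hM.eigenvectorUnitary : Matrix n n ℂ) = 1 :=
    Matrix.mem_unitaryGroup_iff'.mp hM.eigenvectorUnitary.2
  have e1 : matCalc f M = aeval M q := by
    rw [matCalc, dif_pos hM]
    conv_rhs => rw [hM.spectral_theorem, Unitary.conjStarAlgAut_apply]
    rw [aeval_conj hU1 hU2, aeval_diagonal]
    have : (fun i => aeval ((RCLike.ofReal ∘ hM.eigenvalues) i) q)
        = fun i => ((f (hM.eigenvalues i) : ℝ) : ℂ) := funext fun i => by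
      show aeval ((hM.eigenvalues i : ℝ) : ℂ) q = ((f (hM.eigenvalues i) : ℝ) : ℂ)
      rw [aeval_ofReal', hq _ (by simp [hs])]
    rw [this]
  have e2 : aeval M q = U * Matrix.diagonal (fun i => ((q.eval (d i) : ℝ) : ℂ)) * star U := by
    rw [hMdef, aeval_conj h1 h2, aeval_diagonal]
    have : (fun i => aeval ((d i : ℂ)) q) = fun i => ((q.eval (d i) : ℝ) : ℂ) :=
      funext fun i => aeval_ofReal' (d i) q
    rw [this]
  rw [e1, e2, Matrix.trace_mul_comm, ← Matrix.mul_assoc, h2, Matrix.one_mul,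
    Matrix.trace_diagonal]
  congr 1
  funext i
  rw [hq _ (by simp [hs])]

/-- entropy of explicitly diagonalized matrix -/
private lemma vnEntropy_decomp {n : Type*} [Fintype n] [DecidableEq n]
    {U : Matrix n n ℂ} (h1 : U * star U = 1) (h2 : star U * U = 1) (d : n → ℝ) :
    vnEntropy (U * Matrix.diagonal (fun i => (d i : ℂ)) * star U)
      = ∑ i, -(d i * Real.logb 2 (d i)) := by
  rw [vnEntropy, trace_matCalc_decomp _ h1 h2]
  rw [← Complex.ofReal_sum]
  exact Complex.ofReal_re _

private def fent (x : ℝ) : ℝ := -(x * Real.logb 2 x)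

private lemma fent_mul (c t : ℝ) : fent (c * t) = c * fent t + t * fent c := by
  rcases eq_or_ne c 0 with hc | hc
  · simp [fent, hc]
  rcases eq_or_ne t 0 with ht | ht
  · simp [fent, ht]
  unfold fent
  rw [Real.logb, Real.logb, Real.logb, Real.log_mul hc ht]
  ring

private lemma vnEntropy_herm {n : Type*} [Fintype n] [DecidableEq n]
    {A : Matrix n n ℂ} (hA : A.IsHermitian) :
    vnEntropy A = ∑ i, fent (hA.eigenvalues i) := by
  have hU1 : (hA.eigenvectorUnitary : Matrix n n ℂ) * star (hA.eigenvectorUnitary : Matrix n n ℂ) = 1 :=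
    Matrix.mem_unitaryGroup_iff.mp hA.eigenvectorUnitary.2
  have hU2 : star (hA.eigenvectorUnitary : Matrix n n ℂ) * (hA.eigenvectorUnitary : Matrix n n ℂ) = 1 :=
    Matrix.mem_unitaryGroup_iff'.mp hA.eigenvectorUnitary.2
  have hdec : A = (hA.eigenvectorUnitary : Matrix n n ℂ) *
      Matrix.diagonal (fun i => ((hA.eigenvalues i : ℝ) : ℂ)) *
      star (hA.eigenvectorUnitary : Matrix n n ℂ) := hA.spectral_theorem
  rw [show vnEntropy A = vnEntropy ((hA.eigenvectorUnitary : Matrix n n ℂ) *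
      Matrix.diagonal (fun i => ((hA.eigenvalues i : ℝ) : ℂ)) *
      star (hA.eigenvectorUnitary : Matrix n n ℂ)) from congrArg _ hdec]
  exact vnEntropy_decomp hU1 hU2 _

private lemma trace_re_herm {n : Type*} [Fintype n] [DecidableEq n]
    {A : Matrix n n ℂ} (hA : A.IsHermitian) :
    A.trace.re = ∑ i, hA.eigenvalues i := by
  have hU2 : star (hA.eigenvectorUnitary : Matrix n n ℂ) * (hA.eigenvectorUnitary : Matrix n n ℂ) = 1 :=
    Matrix.mem_unitaryGroup_iff'.mp hA.eigenvectorUnitary.2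
  have hdec : A = (hA.eigenvectorUnitary : Matrix n n ℂ) *
      Matrix.diagonal (fun i => ((hA.eigenvalues i : ℝ) : ℂ)) *
      star (hA.eigenvectorUnitary : Matrix n n ℂ) := hA.spectral_theorem
  have : A.trace = ∑ i, ((hA.eigenvalues i : ℝ) : ℂ) := by
    conv_lhs => rw [hdec]
    rw [Matrix.trace_mul_comm, ← Matrix.mul_assoc, hU2, Matrix.one_mul, Matrix.trace_diagonal]
  rw [this, ← Complex.ofReal_sum, Complex.ofReal_re]

private lemma vnEntropy_smul {n : Type*} [Fintype n] [DecidableEq n]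
    {A : Matrix n n ℂ} (hA : A.IsHermitian) (c : ℝ) :
    vnEntropy ((c : ℂ) • A) = c * vnEntropy A + fent c * A.trace.re := by
  have hU1 : (hA.eigenvectorUnitary : Matrix n n ℂ) * star (hA.eigenvectorUnitary : Matrix n n ℂ) = 1 :=
    Matrix.mem_unitaryGroup_iff.mp hA.eigenvectorUnitary.2
  have hU2 : star (hA.eigenvectorUnitary : Matrix n n ℂ) * (hA.eigenvectorUnitary : Matrix n n ℂ) = 1 :=
    Matrix.mem_unitaryGroup_iff'.mp hA.eigenvectorUnitary.2
  have hdec : A = (hA.eigenvectorUnitary : Matrix n n ℂ) *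
      Matrix.diagonal (fun i => ((hA.eigenvalues i : ℝ) : ℂ)) *
      star (hA.eigenvectorUnitary : Matrix n n ℂ) := hA.spectral_theorem
  have hsm : (c : ℂ) • A = (hA.eigenvectorUnitary : Matrix n n ℂ) *
      Matrix.diagonal (fun i => ((c * hA.eigenvalues i : ℝ) : ℂ)) *
      star (hA.eigenvectorUnitary : Matrix n n ℂ) := by
    conv_lhs => rw [hdec]
    rw [← smul_mul_assoc, ← mul_smul_comm, ← Matrix.diagonal_smul]
    congr 2
    refine congrArg Matrix.diagonal (funext fun i => ?_)
    rw [Pi.smul_apply, smul_eq_mul]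
    push_cast
    ring
  rw [show vnEntropy ((c : ℂ) • A) = _ from congrArg _ hsm, vnEntropy_decomp hU1 hU2,
    vnEntropy_herm hA, trace_re_herm hA]
  rw [Finset.mul_sum, Finset.mul_sum, ← Finset.sum_add_distrib]
  refine Finset.sum_congr rfl fun i _ => ?_
  have := fent_mul c (hA.eigenvalues i)
  unfold fent at this ⊢
  rw [this]
  ring

private lemma vnEntropy_diagonal {n : Type*} [Fintype n] [DecidableEq n] (d : n → ℝ) :
    vnEntropy (Matrix.diagonal (fun i => (d i : ℂ))) = ∑ i, fent (d i) := by
  have := vnEntropy_decomp (U := (1 : Matrix n n ℂ)) (by simp) (by simp) d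
  simp only [Matrix.one_mul, star_one, Matrix.mul_one] at this
  rw [this]
  rfl

section CQ
variable {X B : Type*} [Fintype X] [DecidableEq X] [Fintype B] [DecidableEq B]

private lemma cq_mul (P Q : X → Matrix B B ℂ) :
    (∑ x, ketbra x ⊗ₖ P x) * (∑ x, ketbra x ⊗ₖ Q x) = ∑ x, ketbra x ⊗ₖ (P x * Q x) := by
  rw [Finset.sum_mul_sum]
  have key : ∀ x y : X, (ketbra x ⊗ₖ P x) * (ketbra y ⊗ₖ Q y)
      = if x = y then ketbra x ⊗ₖ (P x * Q y) else 0 := by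
    intro x y
    rw [← Matrix.mul_kronecker_mul]
    by_cases h : x = y
    · subst h
      simp [ketbra, Matrix.single_mul_single_same]
    · rw [if_neg h, ketbra, ketbra, Matrix.single_mul_single_of_ne (h := h),
        Matrix.zero_kronecker]
  calc (∑ x, ∑ y, (ketbra x ⊗ₖ P x) * (ketbra y ⊗ₖ Q y))
      = ∑ x, ∑ y, if x = y then ketbra x ⊗ₖ (P x * Q y) else 0 := by
        exact Finset.sum_congr rfl fun x _ => Finset.sum_congr rfl fun y _ => key x y
    _ = ∑ x, ketbra x ⊗ₖ (P x * Q x) := by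
        exact Finset.sum_congr rfl fun x _ => by rw [Finset.sum_ite_eq]; simp

private lemma cq_star (P : X → Matrix B B ℂ) :
    star (∑ x, ketbra x ⊗ₖ P x) = ∑ x, ketbra x ⊗ₖ (P x)ᴴ := by
  rw [Matrix.star_eq_conjTranspose, Matrix.conjTranspose_sum]
  refine Finset.sum_congr rfl fun x _ => ?_
  ext ⟨a, b⟩ ⟨a', b'⟩
  simp [ketbra, Matrix.conjTranspose_apply, Matrix.single, Matrix.of_apply, and_comm,
    apply_ite (starRingEnd ℂ)]

private lemma cq_one : (∑ x : X, ketbra x ⊗ₖ (1 : Matrix B B ℂ)) = 1 := by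
  ext ⟨a, b⟩ ⟨a', b'⟩
  simp [ketbra, Matrix.single, Matrix.one_apply, Prod.ext_iff, ite_and,
    Matrix.sum_apply, Finset.sum_ite_eq, mul_ite, ite_mul, zero_mul, mul_zero, mul_one, one_mul]
  by_cases h : a = a' <;> by_cases h2 : b = b' <;> simp [h, h2]

private lemma cq_diag (g : X → B → ℂ) :
    (∑ x : X, ketbra x ⊗ₖ Matrix.diagonal (g x))
      = Matrix.diagonal (fun p : X × B => g p.1 p.2) := by
  ext ⟨a, b⟩ ⟨a', b'⟩
  simp [ketbra, Matrix.single, Matrix.diagonal_apply, Prod.ext_iff, ite_and,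
    Matrix.sum_apply, Finset.sum_ite_eq, mul_ite, ite_mul, zero_mul, mul_zero, mul_one, one_mul]
  by_cases h : a = a' <;> by_cases h2 : b = b' <;> simp [h, h2]

private lemma vnEntropy_cq (M : X → Matrix B B ℂ) (hM : ∀ x, (M x).IsHermitian) :
    vnEntropy (∑ x, ketbra x ⊗ₖ M x) = ∑ x, vnEntropy (M x) := by
  set V : Matrix (X × B) (X × B) ℂ :=
    ∑ x, ketbra x ⊗ₖ ((hM x).eigenvectorUnitary : Matrix B B ℂ) with hV
  have hVs : star V = ∑ x, ketbra x ⊗ₖ ((hM x).eigenvectorUnitary : Matrix B B ℂ)ᴴ := by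
    rw [hV, cq_star]
  have hV1 : V * star V = 1 := by
    rw [hVs, hV, cq_mul]
    have : ∀ x : X, ((hM x).eigenvectorUnitary : Matrix B B ℂ) *
        ((hM x).eigenvectorUnitary : Matrix B B ℂ)ᴴ = 1 := fun x =>
      Matrix.mem_unitaryGroup_iff.mp (hM x).eigenvectorUnitary.2
    simp_rw [this]
    exact cq_one
  have hV2 : star V * V = 1 := by
    rw [hVs, hV, cq_mul]
    have : ∀ x : X, ((hM x).eigenvectorUnitary : Matrix B B ℂ)ᴴ *
        ((hM x).eigenvectorUnitary : Matrix B B ℂ) = 1 := fun x =>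
      Matrix.mem_unitaryGroup_iff'.mp (hM x).eigenvectorUnitary.2
    simp_rw [this]
    exact cq_one
  have hdec : (∑ x, ketbra x ⊗ₖ M x)
      = V * Matrix.diagonal (fun p : X × B => (((hM p.1).eigenvalues p.2 : ℝ) : ℂ)) * star V := by
    rw [show Matrix.diagonal (fun p : X × B => (((hM p.1).eigenvalues p.2 : ℝ) : ℂ))
        = ∑ x : X, ketbra x ⊗ₖ Matrix.diagonal (fun b => (((hM x).eigenvalues b : ℝ) : ℂ))
      from (cq_diag (fun x b => (((hM x).eigenvalues b : ℝ) : ℂ))).symm, hV, hVs, cq_mul, cq_mul]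
    refine Finset.sum_congr rfl fun x _ => ?_
    have hx : ((hM x).eigenvectorUnitary : Matrix B B ℂ) *
        Matrix.diagonal (fun b => (((hM x).eigenvalues b : ℝ) : ℂ)) *
        ((hM x).eigenvectorUnitary : Matrix B B ℂ)ᴴ = M x := ((hM x).spectral_theorem).symm
    rw [hx]
  rw [show vnEntropy (∑ x, ketbra x ⊗ₖ M x) = _ from congrArg _ hdec,
    vnEntropy_decomp hV1 hV2]
  rw [Fintype.sum_prod_type]
  exact Finset.sum_congr rfl fun x _ => (vnEntropy_herm (hM x)).symm

end CQ

section CQ2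
variable {X B : Type*} [Fintype X] [DecidableEq X] [Fintype B] [DecidableEq B]

private lemma traceOutFst_cq (M : X → Matrix B B ℂ) :
    traceOutFst (∑ x, ketbra x ⊗ₖ M x) = ∑ x, M x := by
  ext b b'
  simp only [traceOutFst, Matrix.of_apply, Matrix.sum_apply, Matrix.kroneckerMap_apply]
  rw [Finset.sum_comm]
  refine Finset.sum_congr rfl fun y _ => ?_
  simp [ketbra, Matrix.single, Finset.sum_ite_eq, ite_and]

private lemma traceOutSnd_cq (M : X → Matrix B B ℂ) :
    traceOutSnd (∑ x, ketbra x ⊗ₖ M x) = Matrix.diagonal (fun x => (M x).trace) := by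
  ext x x'
  simp only [traceOutSnd, Matrix.of_apply, Matrix.sum_apply, Matrix.kroneckerMap_apply]
  rw [Finset.sum_comm]
  by_cases h : x = x'
  · subst h
    simp [ketbra, Matrix.single, Finset.sum_ite_eq, ite_and, Matrix.diagonal_apply,
      Matrix.trace, Matrix.diag]
  · rw [Matrix.diagonal_apply_ne _ h]
    refine Finset.sum_eq_zero fun y _ => Finset.sum_eq_zero fun b _ => ?_
    simp only [ketbra, Matrix.single, Matrix.of_apply, ite_and, mul_ite, ite_mul,
      zero_mul, mul_zero, one_mul]
    rcases eq_or_ne y x with rfl | hy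
    · simp [h]
    · simp [hy]

private lemma kron_sum_right {ι : Type*} (C : Matrix X X ℂ) (s : Finset ι)
    (g : ι → Matrix B B ℂ) : C ⊗ₖ (∑ i ∈ s, g i) = ∑ i ∈ s, C ⊗ₖ g i := by
  ext ⟨a, b⟩ ⟨a', b'⟩
  simp [Matrix.sum_apply, Finset.mul_sum]

private lemma kb_kron_kb {Y : Type*} [DecidableEq Y] (u : X) (v : Y) :
    ketbra u ⊗ₖ ketbra v = ketbra (u, v) := by
  ext ⟨a, b⟩ ⟨a', b'⟩
  simp [ketbra, Matrix.single, Prod.ext_iff, ite_and]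
  by_cases h1 : u = a <;> by_cases h2 : u = a' <;> by_cases h3 : v = b <;>
    by_cases h4 : v = b' <;> simp_all <;> (try rfl) <;>
    (try (by_cases h5 : a = a' <;> by_cases h6 : b = b' <;> simp_all))

private lemma herm_smul {A : Matrix B B ℂ} (h : A.IsHermitian) (c : ℝ) :
    ((c : ℂ) • A).IsHermitian := by
  unfold Matrix.IsHermitian at *
  rw [Matrix.conjTranspose_smul, h]
  congr 1
  simp

private lemma herm_sum {ι : Type*} (s : Finset ι) (g : ι → Matrix B B ℂ)
    (h : ∀ i ∈ s, (g i).IsHermitian) : (∑ i ∈ s, g i).IsHermitian := by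
  unfold Matrix.IsHermitian at *
  rw [Matrix.conjTranspose_sum]
  exact Finset.sum_congr rfl h

end CQ2

private lemma mutInfo_erasure {U V B : Type*} [Fintype U] [DecidableEq U]
    [Fintype V] [DecidableEq V] [Fintype B] [DecidableEq B]
    (p : U × V → ℝ) (ε : ℝ) (A : U → V → Matrix B B ℂ)
    (hH : ∀ u v, (A u v).IsHermitian) (htr : ∀ u v, (A u v).trace = 1) :
    mutInfo (∑ u, ∑ v, (p (u, v) : ℂ) • ((ketbra u ⊗ₖ erasureKet ε v) ⊗ₖ A u v))
      = ε * mutInfo (∑ u, ∑ v, (p (u, v) : ℂ) • (ketbra u ⊗ₖ A u v))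
        + (1 - ε) * mutInfo (∑ u, ∑ v, (p (u, v) : ℂ) • ((ketbra u ⊗ₖ ketbra v) ⊗ₖ A u v)) := by
  classical
  set σ : U → Matrix B B ℂ := fun u => ∑ v, (p (u, v) : ℂ) • A u v with hσdef
  set pu : U → ℝ := fun u => ∑ v, p (u, v) with hpudef
  have hσH : ∀ u, (σ u).IsHermitian := fun u =>
    herm_sum _ _ fun v _ => herm_smul (hH u v) _
  have hσtr : ∀ u, (σ u).trace = ((pu u : ℝ) : ℂ) := fun u => by
    show (∑ v, (p (u, v) : ℂ) • A u v).trace = ((∑ v, p (u, v) : ℝ) : ℂ)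
    simp only [Matrix.trace_sum, Matrix.trace_smul, htr, smul_eq_mul, mul_one]
    push_cast
    rfl
  -- the three cq forms
  set ME : U × Option V → Matrix B B ℂ := fun x =>
    Option.elim x.2 ((ε : ℂ) • σ x.1) (fun v => ((1 - ε : ℝ) : ℂ) • ((p (x.1, v) : ℂ) • A x.1 v))
    with hMEdef
  set M3 : U × V → Matrix B B ℂ := fun x => (p x : ℂ) • A x.1 x.2 with hM3def
  have hMEH : ∀ x, (ME x).IsHermitian := by
    rintro ⟨u, _ | v⟩
    · exact herm_smul (hσH u) ε
    · exact herm_smul (herm_smul (hH u v) _) _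
  have hM3H : ∀ x, (M3 x).IsHermitian := fun x => herm_smul (hH x.1 x.2) _
  have h2 : (∑ u, ∑ v, (p (u, v) : ℂ) • (ketbra u ⊗ₖ A u v)) = ∑ u, ketbra u ⊗ₖ σ u := by
    refine Finset.sum_congr rfl fun u _ => ?_
    show _ = ketbra u ⊗ₖ (∑ v, (p (u, v) : ℂ) • A u v)
    rw [kron_sum_right]
    exact Finset.sum_congr rfl fun v _ => (Matrix.kronecker_smul _ _ _).symm
  have h3 : (∑ u, ∑ v, (p (u, v) : ℂ) • ((ketbra u ⊗ₖ ketbra v) ⊗ₖ A u v))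
      = ∑ x : U × V, ketbra x ⊗ₖ M3 x := by
    rw [Fintype.sum_prod_type]
    refine Finset.sum_congr rfl fun u _ => Finset.sum_congr rfl fun v _ => ?_
    show (p (u, v) : ℂ) • ((ketbra u ⊗ₖ ketbra v) ⊗ₖ A u v) = ketbra (u, v) ⊗ₖ ((p (u, v) : ℂ) • A u v)
    rw [kb_kron_kb, Matrix.kronecker_smul]
  have hE : (∑ u, ∑ v, (p (u, v) : ℂ) • ((ketbra u ⊗ₖ erasureKet ε v) ⊗ₖ A u v))
      = ∑ x : U × Option V, ketbra x ⊗ₖ ME x := by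
    rw [Fintype.sum_prod_type]
    have rhs : ∀ u : U, (∑ o : Option V, ketbra (u, o) ⊗ₖ ME (u, o))
        = ketbra (u, (none : Option V)) ⊗ₖ ((ε : ℂ) • σ u)
          + ∑ v, ketbra (u, some v) ⊗ₖ (((1 - ε : ℝ) : ℂ) • ((p (u, v) : ℂ) • A u v)) := by
      intro u
      rw [Fintype.sum_option]
      rfl
    have lhs : ∀ u : U, (∑ v, (p (u, v) : ℂ) • ((ketbra u ⊗ₖ erasureKet ε v) ⊗ₖ A u v))
        = ketbra (u, (none : Option V)) ⊗ₖ ((ε : ℂ) • σ u)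
          + ∑ v, ketbra (u, some v) ⊗ₖ (((1 - ε : ℝ) : ℂ) • ((p (u, v) : ℂ) • A u v)) := by
      intro u
      have expand : ∀ v, (p (u, v) : ℂ) • ((ketbra u ⊗ₖ erasureKet ε v) ⊗ₖ A u v)
          = ketbra (u, some v) ⊗ₖ (((1 - ε : ℝ) : ℂ) • ((p (u, v) : ℂ) • A u v))
            + ketbra (u, (none : Option V)) ⊗ₖ ((ε : ℂ) • ((p (u, v) : ℂ) • A u v)) := by
        intro v
        simp only [erasureKet, Matrix.kronecker_add, Matrix.add_kronecker,
          Matrix.kronecker_smul, Matrix.smul_kronecker, kb_kron_kb, smul_add, smul_smul]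
        module
      rw [Finset.sum_congr rfl fun v _ => expand v, Finset.sum_add_distrib, add_comm]
      congr 1
      rw [← kron_sum_right]
      refine congrArg _ ?_
      show (∑ v, (ε : ℂ) • ((p (u, v) : ℂ) • A u v)) = (ε : ℂ) • (∑ v, (p (u, v) : ℂ) • A u v)
      rw [Finset.smul_sum]
    rw [Finset.sum_congr rfl fun u _ => lhs u, ← Finset.sum_congr rfl fun u _ => rhs u]
  -- common B-marginal
  set R : Matrix B B ℂ := ∑ u, ∑ v, (p (u, v) : ℂ) • A u v with hRdef
  have hRE : traceOutFst (∑ x : U × Option V, ketbra x ⊗ₖ ME x) = R := by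
    rw [traceOutFst_cq, Fintype.sum_prod_type, hRdef]
    refine Finset.sum_congr rfl fun u _ => ?_
    rw [Fintype.sum_option]
    show (ε : ℂ) • σ u + (∑ v, ((1 - ε : ℝ) : ℂ) • ((p (u, v) : ℂ) • A u v)) = _
    rw [← Finset.smul_sum]
    show (ε : ℂ) • σ u + ((1 - ε : ℝ) : ℂ) • σ u = σ u
    rw [← add_smul, show ((ε : ℂ) + ((1 - ε : ℝ) : ℂ)) = 1 by push_cast; ring, one_smul]
  have hR2 : traceOutFst (∑ u, ketbra u ⊗ₖ σ u) = R := by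
    rw [traceOutFst_cq]
  have hR3 : traceOutFst (∑ x : U × V, ketbra x ⊗ₖ M3 x) = R := by
    rw [traceOutFst_cq, hRdef, Fintype.sum_prod_type]
  -- classical marginals
  have hCE : traceOutSnd (∑ x : U × Option V, ketbra x ⊗ₖ ME x)
      = Matrix.diagonal (fun x : U × Option V =>
          ((Option.elim x.2 (ε * pu x.1) (fun v => (1 - ε) * p (x.1, v)) : ℝ) : ℂ)) := by
    rw [traceOutSnd_cq]
    refine congrArg Matrix.diagonal (funext fun x => ?_)
    rcases x with ⟨u, _ | v⟩
    · show ((ε : ℂ) • σ u).trace = _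
      rw [Matrix.trace_smul, hσtr]
      push_cast
      simp [smul_eq_mul]
    · show (((1 - ε : ℝ) : ℂ) • ((p (u, v) : ℂ) • A u v)).trace = _
      rw [Matrix.trace_smul, Matrix.trace_smul, htr]
      push_cast
      simp [smul_eq_mul]
  have hC2 : traceOutSnd (∑ u, ketbra u ⊗ₖ σ u)
      = Matrix.diagonal (fun u => ((pu u : ℝ) : ℂ)) := by
    rw [traceOutSnd_cq]
    exact congrArg Matrix.diagonal (funext fun u => hσtr u)
  have hC3 : traceOutSnd (∑ x : U × V, ketbra x ⊗ₖ M3 x)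
      = Matrix.diagonal (fun x : U × V => ((p x : ℝ) : ℂ)) := by
    rw [traceOutSnd_cq]
    refine congrArg Matrix.diagonal (funext fun x => ?_)
    show ((p x : ℂ) • A x.1 x.2).trace = _
    rw [Matrix.trace_smul, htr]
    simp [smul_eq_mul]
  -- entropies
  have hS : ∑ u, pu u = ∑ u, ∑ v, p (u, v) := rfl
  set S : ℝ := ∑ u, ∑ v, p (u, v) with hSdef
  set E2 : ℝ := ∑ u, vnEntropy (σ u) with hE2def
  set E3 : ℝ := ∑ u, ∑ v, vnEntropy ((p (u, v) : ℂ) • A u v) with hE3def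
  set C2 : ℝ := ∑ u, fent (pu u) with hC2def
  set C3 : ℝ := ∑ u, ∑ v, fent (p (u, v)) with hC3def
  have htrre : ∀ u v, ((p (u, v) : ℂ) • A u v).trace.re = p (u, v) := by
    intro u v
    rw [Matrix.trace_smul, htr]
    simp [smul_eq_mul]
  have entE : vnEntropy (∑ x : U × Option V, ketbra x ⊗ₖ ME x)
      = ε * E2 + fent ε * S + (1 - ε) * E3 + fent (1 - ε) * S := by
    rw [vnEntropy_cq _ hMEH, Fintype.sum_prod_type]
    have inner : ∀ u : U, (∑ o : Option V, vnEntropy (ME (u, o)))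
        = (ε * vnEntropy (σ u) + fent ε * pu u)
          + ∑ v, ((1 - ε) * vnEntropy ((p (u, v) : ℂ) • A u v) + fent (1 - ε) * p (u, v)) := by
      intro u
      rw [Fintype.sum_option]
      congr 1
      · show vnEntropy ((ε : ℂ) • σ u) = _
        rw [vnEntropy_smul (hσH u) ε, hσtr]
        simp
      · refine Finset.sum_congr rfl fun v _ => ?_
        show vnEntropy (((1 - ε : ℝ) : ℂ) • ((p (u, v) : ℂ) • A u v)) = _
        rw [vnEntropy_smul (herm_smul (hH u v) _) (1 - ε), htrre]
    rw [Finset.sum_congr rfl fun u _ => inner u]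
    have e1 : ∑ u, (ε * vnEntropy (σ u) + fent ε * pu u) = ε * E2 + fent ε * S := by
      rw [Finset.sum_add_distrib, ← Finset.mul_sum, ← Finset.mul_sum, hS]
    have e2 : ∑ u, ∑ v, ((1 - ε) * vnEntropy ((p (u, v) : ℂ) • A u v) + fent (1 - ε) * p (u, v))
        = (1 - ε) * E3 + fent (1 - ε) * S := by
      simp only [Finset.sum_add_distrib, ← Finset.mul_sum]; rfl
    rw [Finset.sum_add_distrib, e1, e2]
    ring
  have ent2 : vnEntropy (∑ u, ketbra u ⊗ₖ σ u) = E2 := by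
    rw [vnEntropy_cq _ hσH, hE2def]
  have ent3 : vnEntropy (∑ x : U × V, ketbra x ⊗ₖ M3 x) = E3 := by
    rw [vnEntropy_cq _ hM3H, Fintype.sum_prod_type, hE3def]
  have centE : vnEntropy (Matrix.diagonal (fun x : U × Option V =>
      ((Option.elim x.2 (ε * pu x.1) (fun v => (1 - ε) * p (x.1, v)) : ℝ) : ℂ)))
      = ε * C2 + fent ε * S + (1 - ε) * C3 + fent (1 - ε) * S := by
    rw [vnEntropy_diagonal, Fintype.sum_prod_type]
    have inner : ∀ u : U, (∑ o : Option V,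
        fent (Option.elim o (ε * pu u) (fun v => (1 - ε) * p (u, v))))
        = (ε * fent (pu u) + pu u * fent ε)
          + ∑ v, ((1 - ε) * fent (p (u, v)) + p (u, v) * fent (1 - ε)) := by
      intro u
      rw [Fintype.sum_option]
      congr 1
      · exact fent_mul ε (pu u)
      · exact Finset.sum_congr rfl fun v _ => fent_mul (1 - ε) (p (u, v))
    rw [Finset.sum_congr rfl fun u _ => inner u]
    have e1 : ∑ u, (ε * fent (pu u) + pu u * fent ε) = ε * C2 + fent ε * S := by
      rw [Finset.sum_add_distrib, ← Finset.mul_sum, ← Finset.sum_mul, hS]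
      show ε * C2 + S * fent ε = ε * C2 + fent ε * S
      ring
    have e2 : ∑ u, ∑ v, ((1 - ε) * fent (p (u, v)) + p (u, v) * fent (1 - ε))
        = (1 - ε) * C3 + fent (1 - ε) * S := by
      simp only [Finset.sum_add_distrib, ← Finset.mul_sum, ← Finset.sum_mul]
      show (1 - ε) * C3 + S * fent (1 - ε) = (1 - ε) * C3 + fent (1 - ε) * S
      ring
    rw [Finset.sum_add_distrib, e1, e2]
    ring
  have cent2 : vnEntropy (Matrix.diagonal (fun u => ((pu u : ℝ) : ℂ))) = C2 := by
    rw [vnEntropy_diagonal, hC2def]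
  have cent3 : vnEntropy (Matrix.diagonal (fun x : U × V => ((p x : ℝ) : ℂ))) = C3 := by
    rw [vnEntropy_diagonal, hC3def, Fintype.sum_prod_type]
  -- assemble
  rw [show mutInfo (∑ u, ∑ v, (p (u, v) : ℂ) • ((ketbra u ⊗ₖ erasureKet ε v) ⊗ₖ A u v))
      = mutInfo (∑ x : U × Option V, ketbra x ⊗ₖ ME x) from congrArg _ hE,
    show mutInfo (∑ u, ∑ v, (p (u, v) : ℂ) • (ketbra u ⊗ₖ A u v))
      = mutInfo (∑ u, ketbra u ⊗ₖ σ u) from congrArg _ h2,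
    show mutInfo (∑ u, ∑ v, (p (u, v) : ℂ) • ((ketbra u ⊗ₖ ketbra v) ⊗ₖ A u v))
      = mutInfo (∑ x : U × V, ketbra x ⊗ₖ M3 x) from congrArg _ h3]
  rw [mutInfo, mutInfo, mutInfo, hRE, hR2, hR3, hCE, hC2, hC3, centE, cent2, cent3,
    entE, ent2, ent3]
  ring

private lemma traceOutSnd_herm {a b : Type*} [Fintype a] [Fintype b]
    {M : Matrix (a × b) (a × b) ℂ} (h : M.IsHermitian) : (traceOutSnd M).IsHermitian := by
  unfold Matrix.IsHermitian at *
  ext i i'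
  simp only [traceOutSnd, Matrix.conjTranspose_apply, Matrix.of_apply, star_sum]
  refine Finset.sum_congr rfl fun j _ => ?_
  rw [← Matrix.conjTranspose_apply, h]

private lemma traceOutFst_herm {a b : Type*} [Fintype a] [Fintype b]
    {M : Matrix (a × b) (a × b) ℂ} (h : M.IsHermitian) : (traceOutFst M).IsHermitian := by
  unfold Matrix.IsHermitian at *
  ext i i'
  simp only [traceOutFst, Matrix.conjTranspose_apply, Matrix.of_apply, star_sum]
  refine Finset.sum_congr rfl fun j _ => ?_
  rw [← Matrix.conjTranspose_apply, h]

private lemma traceOutSnd_trace {a b : Type*} [Fintype a] [Fintype b]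
    (M : Matrix (a × b) (a × b) ℂ) : (traceOutSnd M).trace = M.trace := by
  simp only [Matrix.trace, Matrix.diag, traceOutSnd, Matrix.of_apply]
  rw [Fintype.sum_prod_type]

private lemma traceOutFst_trace {a b : Type*} [Fintype a] [Fintype b]
    (M : Matrix (a × b) (a × b) ℂ) : (traceOutFst M).trace = M.trace := by
  simp only [Matrix.trace, Matrix.diag, traceOutFst, Matrix.of_apply]
  rw [Finset.sum_comm, Fintype.sum_prod_type]

/-- With `U′ = (U,Ṽ)`,
`I[U′;B] − I[U′;S] = I[U;B] − I[U;S] + (1−ε)(I[V;B|U] − I[V;S|U])`. -/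
theorem erasure_extension_info_difference {dU dV dB dS : ℕ}
    (p : Fin dU × Fin dV → ℝ) (hp : ∀ x, 0 ≤ p x) (hp1 : ∑ x, p x = 1)
    (ε : ℝ) (hε : ε ∈ Set.Icc (0 : ℝ) 1)
    (ρBS : Fin dU → Fin dV → Matrix ((Fin dB) × (Fin dS)) ((Fin dB) × (Fin dS)) ℂ)
    (hρBS : ∀ u v, IsDensityMatrix (ρBS u v)) :
    (mutInfo (∑ u, ∑ v, (p (u, v) : ℂ) •
          ((ketbra u ⊗ₖ erasureKet ε v) ⊗ₖ traceOutSnd (ρBS u v))) -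
        mutInfo (∑ u, ∑ v, (p (u, v) : ℂ) •
          ((ketbra u ⊗ₖ erasureKet ε v) ⊗ₖ traceOutFst (ρBS u v)))) =
      (mutInfo (∑ u, ∑ v, (p (u, v) : ℂ) • (ketbra u ⊗ₖ traceOutSnd (ρBS u v))) -
        mutInfo (∑ u, ∑ v, (p (u, v) : ℂ) • (ketbra u ⊗ₖ traceOutFst (ρBS u v)))) +
      (1 - ε) *
        ((mutInfo (∑ u, ∑ v, (p (u, v) : ℂ) •
              ((ketbra u ⊗ₖ ketbra v) ⊗ₖ traceOutSnd (ρBS u v))) -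
            mutInfo (∑ u, ∑ v, (p (u, v) : ℂ) • (ketbra u ⊗ₖ traceOutSnd (ρBS u v)))) -
          (mutInfo (∑ u, ∑ v, (p (u, v) : ℂ) •
              ((ketbra u ⊗ₖ ketbra v) ⊗ₖ traceOutFst (ρBS u v))) -
            mutInfo (∑ u, ∑ v, (p (u, v) : ℂ) • (ketbra u ⊗ₖ traceOutFst (ρBS u v))))) := by
  have hB := mutInfo_erasure p ε (fun u v => traceOutSnd (ρBS u v))
    (fun u v => traceOutSnd_herm (hρBS u v).1.1)
    (fun u v => by rw [traceOutSnd_trace]; exact (hρBS u v).2)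
  have hS := mutInfo_erasure p ε (fun u v => traceOutFst (ρBS u v))
    (fun u v => traceOutFst_herm (hρBS u v).1.1)
    (fun u v => by rw [traceOutFst_trace]; exact (hρBS u v).2)
  rw [hB, hS]
  ring

end
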